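/- (Dictator property for OLF) Let S be an OLF system on an odd number n of actors, and let i be an actor whose set of successors is all the other actors, i.e., S(i) = V \ {i}. Then SAT_S(i) = 2^n. -/
import Mathlib


open Finset

/-- The set of predecessors of `i` in the digraph with edge set `E`. -/
def preds {n : ℕ} (E : Finset (Fin n × Fin n)) (i : Fin n) : Finset (Fin n) :=
  Finset.univ.filter (fun j => (j, i) ∈ E)

/-- The set of successors of `i` in the digraph with edge set `E`. -/
def succs {n : ℕ} (E : Finset (Fin n × Fin n)) (i : Fin n) : Finset (Fin n) :=
  Finset.univ.filter (fun j => (i, j) ∈ E)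

/-- `E` is the edge set of an OLF system: every edge runs from a vertex with no
predecessors (an opinion leader) to a vertex with no successors (a follower). -/
def IsOLF {n : ℕ} (E : Finset (Fin n × Fin n)) : Prop :=
  ∀ e ∈ E, preds E e.1 = ∅ ∧ succs E e.2 = ∅

/-- One step of the unanimity rule: actor `i` adopts the common decision of its
predecessors (as recorded in `c`) if they are nonempty and unanimous, and keeps
its own initial decision `x i` otherwise. -/
def unanStep {n : ℕ} (E : Finset (Fin n × Fin n)) (x c : Fin n → Bool) (i : Fin n) : Bool :=
  if (preds E i).Nonempty ∧ ∀ j ∈ preds E i, c j = true then true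
  else if (preds E i).Nonempty ∧ ∀ j ∈ preds E i, c j = false then false
  else x i

/-- The collective decision vector of an OLF system. -/
def olfVec {n : ℕ} (E : Finset (Fin n × Fin n)) (x : Fin n → Bool) : Fin n → Bool :=
  unanStep E x x

/-- Simple majority over a decision vector. -/
def majority {n : ℕ} (c : Fin n → Bool) : Bool :=
  decide ((Finset.univ.filter (fun i => c i = true)).card >
          (Finset.univ.filter (fun i => c i = false)).card)

/-- The collective decision function of an OLF system. -/
def olfC {n : ℕ} (E : Finset (Fin n × Fin n)) (x : Fin n → Bool) : Bool :=
  majority (olfVec E x)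

/-- The satisfaction score of actor `i` under a collective decision making model `C`. -/
def SAT {n : ℕ} (C : (Fin n → Bool) → Bool) (i : Fin n) : ℕ :=
  (Finset.univ.filter (fun x : Fin n → Bool => C x = x i)).card

/-- Dictator property for OLF systems: an actor whose set of successors is all
the other actors has satisfaction score `2^n`. -/
theorem olf_dictator (n : ℕ) (hn : Odd n) (E : Finset (Fin n × Fin n)) (hE : IsOLF E)
    (i : Fin n) (hsucc : succs E i = Finset.univ \ {i}) :
    SAT (olfC E) i = 2 ^ n := by
  have hmem : ∀ j : Fin n, j ≠ i → (i, j) ∈ E := by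
    intro j hj
    have : j ∈ succs E i := by rw [hsucc]; simp [hj]
    simpa [succs] using this
  have hpi : preds E i = ∅ := by
    rw [Finset.eq_empty_iff_forall_notMem]
    intro k hk
    have hkE : (k, i) ∈ E := by simpa [preds] using hk
    have hsi : succs E i = ∅ := (hE _ hkE).2
    have hki : k = i := by
      by_contra h
      have h2 : k ∈ succs E i := by simp [succs, hmem k h]
      simp [hsi] at h2
    subst hki
    have h3 : k ∈ succs E k := by simp [succs, hkE]
    simp [hsi] at h3
  have hpj : ∀ j : Fin n, j ≠ i → preds E j = {i} := by
    intro j hj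
    ext k
    simp only [preds, Finset.mem_filter, Finset.mem_univ, true_and, Finset.mem_singleton]
    constructor
    · intro hkj
      by_contra hki
      have hik : (i, k) ∈ E := hmem k hki
      have h1 : preds E k = ∅ := (hE _ hkj).1
      have h2 : i ∈ preds E k := by simp [preds, hik]
      simp [h1] at h2
    · rintro rfl; exact hmem j hj
  have hc : ∀ x : Fin n → Bool, olfVec E x = fun _ => x i := by
    intro x
    funext j
    by_cases hj : j = i
    · subst hj; simp [olfVec, unanStep, hpi]
    · simp only [olfVec, unanStep, hpj j hj]
      cases h : x i <;> simp [h]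
  have hC : ∀ x : Fin n → Bool, olfC E x = x i := by
    intro x
    rw [olfC, hc x]
    have hn0 : 0 < n := hn.pos
    cases h : x i <;>
      simp [majority, Finset.filter_true_of_mem, Finset.filter_false_of_mem,
        Finset.card_univ, hn0]
  unfold SAT
  have huniv : (Finset.univ.filter (fun x : Fin n → Bool => olfC E x = x i)) =
      Finset.univ := by
    rw [Finset.filter_true_of_mem]
    intro x _; exact hC x
  rw [huniv, Finset.card_univ]
  simp
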